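/- arXiv:1902.05171 — 2 statements merged into one kernel-verified Lean document; each statement's English description precedes it below -/
import Mathlib

section
/- Let f₀, g₀ : ℝ → ℝ be continuous, and suppose A, X : [t₁, t₂] → ℝ are differentiable with Ȧ = -A f₀(A), Ẋ = g₀(A), and A(t) f₀(A(t)) ≠ 0 for all t ∈ [t₁,t₂]. Then X(t) - X(t₁) = ∫_{A(t)}^{A(t₁)} g₀(y)/(y f₀(y)) dy for all t ∈ [t₁,t₂]. -/
open Set intervalIntegral

theorem stmt4 (f₀ g₀ : ℝ → ℝ) (hf₀ : Continuous f₀) (hg₀ : Continuous g₀)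
    (t₁ t₂ : ℝ) (h12 : t₁ ≤ t₂) (A X : ℝ → ℝ)
    (hA : ∀ t ∈ Icc t₁ t₂, HasDerivAt A (-(A t) * f₀ (A t)) t)
    (hX : ∀ t ∈ Icc t₁ t₂, HasDerivAt X (g₀ (A t)) t)
    (hne : ∀ t ∈ Icc t₁ t₂, A t * f₀ (A t) ≠ 0) :
    ∀ t ∈ Icc t₁ t₂, X t - X t₁ = ∫ y in (A t)..(A t₁), g₀ y / (y * f₀ y) := by
  set h : ℝ → ℝ := fun y => g₀ y / (y * f₀ y) with hh
  set U : Set ℝ := {y | y * f₀ y ≠ 0} with hU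
  have hUopen : IsOpen U := by
    have : Continuous fun y => y * f₀ y := continuous_id.mul hf₀
    exact isOpen_compl_iff.mpr (isClosed_singleton.preimage this)
  have hhU : ContinuousOn h U :=
    ContinuousOn.div hg₀.continuousOn (continuous_id.mul hf₀).continuousOn
      (fun y hy => hy)
  set S : Set ℝ := A '' Icc t₁ t₂ with hS
  have hAcont : ContinuousOn A (Icc t₁ t₂) := fun t ht =>
    (hA t ht).continuousAt.continuousWithinAt
  have hSU : S ⊆ U := by
    rintro y ⟨t, ht, rfl⟩; exact hne t ht
  have hSconn : S.OrdConnected :=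
    ((isPreconnected_Icc).image A hAcont).ordConnected
  have hA1S : A t₁ ∈ S := ⟨t₁, ⟨le_refl _, h12⟩, rfl⟩
  set G : ℝ → ℝ := fun x => ∫ y in (A t₁)..x, h y with hG
  have hGderiv : ∀ x ∈ S, HasDerivAt G (h x) x := by
    intro x hx
    have hsub : uIcc (A t₁) x ⊆ S := hSconn.uIcc_subset hA1S hx
    have hint : IntervalIntegrable h MeasureTheory.volume (A t₁) x :=
      (hhU.mono (hsub.trans hSU)).intervalIntegrable
    exact intervalIntegral.integral_hasDerivAt_right hint
      (hhU.stronglyMeasurableAtFilter hUopen x (hSU hx))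
      ((hhU.continuousAt (hUopen.mem_nhds (hSU hx))))
  -- Ψ = X + G ∘ A has zero derivative on Icc
  have hPsi : ∀ t ∈ Icc t₁ t₂, HasDerivAt (fun t => X t + G (A t)) 0 t := by
    intro t ht
    have hAS : A t ∈ S := ⟨t, ht, rfl⟩
    have hcomp : HasDerivAt (fun t => G (A t)) (h (A t) * (-(A t) * f₀ (A t))) t :=
      (hGderiv (A t) hAS).comp t (hA t ht)
    have := (hX t ht).add hcomp
    have key : g₀ (A t) + h (A t) * (-(A t) * f₀ (A t)) = 0 := by
      have hne' := hne t ht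
      simp only [hh]
      field_simp
      rw [div_self hne']; ring
    rwa [key] at this
  have hPsicont : ContinuousOn (fun t => X t + G (A t)) (Icc t₁ t₂) := fun t ht =>
    (hPsi t ht).continuousAt.continuousWithinAt
  have hconst : ∀ t ∈ Icc t₁ t₂, X t + G (A t) = X t₁ + G (A t₁) := by
    intro t ht
    exact constant_of_has_deriv_right_zero hPsicont
      (fun x hx => ((hPsi x (Ico_subset_Icc_self hx)).hasDerivWithinAt)) t ht
  intro t ht
  have := hconst t ht
  have hG1 : G (A t₁) = 0 := intervalIntegral.integral_same
  have : X t - X t₁ = -G (A t) := by rw [hG1] at this; linarith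
  rw [this, hG]
  exact (intervalIntegral.integral_symm (A t₁) (A t)).symm
end

section
/- Fix κ > 0, λ ∈ ℝ, and t₀, X₀ ∈ ℝ. Let A(t) = 1 + 1/√(1 + e^{2κ(t₀ - t)}) and X(t) = 2λ(t - t₀) + (λ/κ) ln(1 + √(1 + e^{2κ(t₀ - t)})) + X₀. Then Ẋ(t) = λ A(t) for all t ∈ ℝ. -/
theorem stmt9 (κ lam t₀ X₀ : ℝ) (hκ : 0 < κ)
    (A X : ℝ → ℝ)
    (hAdef : ∀ t, A t = 1 + 1 / Real.sqrt (1 + Real.exp (2 * κ * (t₀ - t))))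
    (hXdef : ∀ t, X t = 2 * lam * (t - t₀)
        + (lam / κ) * Real.log (1 + Real.sqrt (1 + Real.exp (2 * κ * (t₀ - t)))) + X₀) :
    ∀ t, HasDerivAt X (lam * A t) t := by
  intro t
  have hE : (0:ℝ) < Real.exp (2 * κ * (t₀ - t)) := Real.exp_pos _
  have h1e : (0:ℝ) < 1 + Real.exp (2 * κ * (t₀ - t)) := by linarith
  set s := Real.sqrt (1 + Real.exp (2 * κ * (t₀ - t))) with hsdef
  have hspos : 0 < s := Real.sqrt_pos.mpr h1e
  have hs2 : s ^ 2 = 1 + Real.exp (2 * κ * (t₀ - t)) := Real.sq_sqrt h1e.le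
  have h1s : (0:ℝ) < 1 + s := by linarith
  have hlin : HasDerivAt (fun u => 2 * κ * (t₀ - u)) (-(2 * κ)) t := by
    simpa using ((hasDerivAt_id t).const_sub t₀).const_mul (2 * κ)
  have hexp : HasDerivAt (fun u => Real.exp (2 * κ * (t₀ - u)))
      (Real.exp (2 * κ * (t₀ - t)) * (-(2 * κ))) t := hlin.exp
  have hinner : HasDerivAt (fun u => 1 + Real.exp (2 * κ * (t₀ - u)))
      (Real.exp (2 * κ * (t₀ - t)) * (-(2 * κ))) t := hexp.const_add 1
  have hsqrt : HasDerivAt (fun u => Real.sqrt (1 + Real.exp (2 * κ * (t₀ - u))))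
      (1 / (2 * s) * (Real.exp (2 * κ * (t₀ - t)) * (-(2 * κ)))) t :=
    (Real.hasDerivAt_sqrt (ne_of_gt h1e)).comp t hinner
  have h1sqrt : HasDerivAt (fun u => 1 + Real.sqrt (1 + Real.exp (2 * κ * (t₀ - u))))
      (1 / (2 * s) * (Real.exp (2 * κ * (t₀ - t)) * (-(2 * κ)))) t := hsqrt.const_add 1
  have hlog : HasDerivAt (fun u => Real.log (1 + Real.sqrt (1 + Real.exp (2 * κ * (t₀ - u)))))
      ((1 + s)⁻¹ * (1 / (2 * s) * (Real.exp (2 * κ * (t₀ - t)) * (-(2 * κ))))) t :=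
    by have := (Real.hasDerivAt_log (ne_of_gt h1s)).comp t h1sqrt; exact this
  have hfirst : HasDerivAt (fun u => 2 * lam * (u - t₀)) (2 * lam) t := by
    simpa using ((hasDerivAt_id t).sub_const t₀).const_mul (2 * lam)
  have hX : HasDerivAt X
      (2 * lam + (lam / κ) * ((1 + s)⁻¹ * (1 / (2 * s) * (Real.exp (2 * κ * (t₀ - t)) * (-(2 * κ)))))) t := by
    have := ((hfirst.add (hlog.const_mul (lam / κ))).add_const X₀)
    refine HasDerivAt.congr_deriv (this.congr_of_eventuallyEq ?_) (by ring)
    filter_upwards with u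
    rw [hXdef u]
    rfl
  refine hX.congr_deriv ?_
  rw [hAdef t]
  rw [← hsdef]
  have he : Real.exp (2 * κ * (t₀ - t)) = s ^ 2 - 1 := by linarith
  rw [he]
  field_simp
  ring
end
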